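/- Let L ≥ 1 be a natural number, U ∈ (0, π/4), and Δ₄, Δ₅ positive reals with Δ₄ ≠ Δ₅. Let a₁, a₂, a₃ ∈ (πL, πL+U), and for each i ∈ {1,2,3} let Nᵢ, Qᵢ, Aᵢ, Bᵢ, Pᵢ⁴, Pᵢ⁵ be positive reals such that: (i) a₁·sin²(a₁)·(N₁/Q₁) = E₁(L,U), a₂·cos²(a₂)·(N₂/Q₂) = E₂(L,U), a₃·cos(2a₃)·(N₃/Q₃) = E₃(L,U); and (ii) (1+Δ₄)^{1/Δ₄} · Aᵢ · (Pᵢ⁴/Qᵢ)^{1/Δ₄} = (1+Δ₅)^{1/Δ₅} · Bᵢ · (Pᵢ⁵/Qᵢ)^{1/Δ₅} for each i. Then the secondary exact complete hybrid formula holds: a₂ · N₂ · (P₂⁵)^{Δ₄/(Δ₅−Δ₄)} · (P₂⁴)^{−Δ₅/(Δ₅−Δ₄)} · (A₂/B₂)^{−Δ₄Δ₅/(Δ₅−Δ₄)} · cos²(a₂) − a₁ · N₁ · (P₁⁵)^{Δ₄/(Δ₅−Δ₄)} · (P₁⁴)^{−Δ₅/(Δ₅−Δ₄)} · (A₁/B₁)^{−Δ₄Δ₅/(Δ₅−Δ₄)}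 · sin²(a₁) = a₃ · N₃ · (P₃⁵)^{Δ₄/(Δ₅−Δ₄)} · (P₃⁴)^{−Δ₅/(Δ₅−Δ₄)} · (A₃/B₃)^{−Δ₄Δ₅/(Δ₅−Δ₄)} · cos(2a₃). -/

import Mathlib

open Real

lemma key_aux (Δ₄ Δ₅ : ℝ) (hΔ₄ : 0 < Δ₄) (hΔ₅ : 0 < Δ₅) (hne : Δ₄ ≠ Δ₅)
    (Q A B P4 P5 : ℝ) (hQ : 0 < Q) (hA : 0 < A) (hB : 0 < B)
    (hP4 : 0 < P4) (hP5 : 0 < P5)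
    (g : (1 + Δ₄) ^ (1 / Δ₄) * A * (P4 / Q) ^ (1 / Δ₄)
        = (1 + Δ₅) ^ (1 / Δ₅) * B * (P5 / Q) ^ (1 / Δ₅)) :
    P5 ^ (Δ₄ / (Δ₅ - Δ₄)) * P4 ^ (-(Δ₅ / (Δ₅ - Δ₄))) * (A / B) ^ (-(Δ₄ * Δ₅ / (Δ₅ - Δ₄)))
      = ((1 + Δ₄) ^ (Δ₅ / (Δ₅ - Δ₄)) * (1 + Δ₅) ^ (-(Δ₄ / (Δ₅ - Δ₄)))) / Q := by
  have hd : Δ₅ - Δ₄ ≠ 0 := sub_ne_zero.2 (Ne.symm hne)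
  have h4 : (0:ℝ) < 1 + Δ₄ := by linarith
  have h5 : (0:ℝ) < 1 + Δ₅ := by linarith
  have hlhs : 0 < P5 ^ (Δ₄ / (Δ₅ - Δ₄)) * P4 ^ (-(Δ₅ / (Δ₅ - Δ₄))) * (A / B) ^ (-(Δ₄ * Δ₅ / (Δ₅ - Δ₄))) := by positivity
  have hrhs : 0 < ((1 + Δ₄) ^ (Δ₅ / (Δ₅ - Δ₄)) * (1 + Δ₅) ^ (-(Δ₄ / (Δ₅ - Δ₄)))) / Q := by positivity
  have hlog := congrArg Real.log g
  rw [Real.log_mul (by positivity) (by positivity), Real.log_mul (by positivity) (by positivity),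
    Real.log_mul (by positivity) (by positivity), Real.log_mul (by positivity) (by positivity),
    Real.log_rpow h4, Real.log_rpow h5, Real.log_rpow (by positivity), Real.log_rpow (by positivity),
    Real.log_div (ne_of_gt hP4) (ne_of_gt hQ), Real.log_div (ne_of_gt hP5) (ne_of_gt hQ)] at hlog
  rw [← Real.exp_log hlhs, ← Real.exp_log hrhs]
  congr 1
  rw [Real.log_mul (by positivity) (by positivity), Real.log_div (by positivity) (ne_of_gt hQ),
    Real.log_mul (by positivity) (by positivity),
    Real.log_rpow hP5, Real.log_rpow hP4, Real.log_rpow (by positivity),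
    Real.log_mul (by positivity) (by positivity),
    Real.log_rpow h4, Real.log_rpow h5, Real.log_div (ne_of_gt hA) (ne_of_gt hB)]
  have hlog2 : Δ₅ * Real.log (1 + Δ₄) + Δ₄ * Δ₅ * Real.log A + Δ₅ * (Real.log P4 - Real.log Q)
      = Δ₄ * Real.log (1 + Δ₅) + Δ₄ * Δ₅ * Real.log B + Δ₄ * (Real.log P5 - Real.log Q) := by
    have h0 := congrArg (fun x => Δ₄ * Δ₅ * x) hlog
    field_simp at h0
    exact mul_left_cancel₀ (mul_ne_zero hΔ₄.ne' hΔ₅.ne') (by linear_combination (Δ₄ * Δ₅) * h0)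
  field_simp
  linear_combination (-1 : ℝ) * hlog2

noncomputable def E₁ (L : ℕ) (U : ℝ) : ℝ :=
  (2 * Real.pi * L + U) / 4
    - (1 / 2) * (Real.pi * L + U) * (Real.sin (2 * U) / (2 * U))
    + (1 / 4) * (Real.sin U ^ 2 / U)

noncomputable def E₂ (L : ℕ) (U : ℝ) : ℝ :=
  (2 * Real.pi * L + U) / 4
    + (1 / 2) * (Real.pi * L + U) * (Real.sin (2 * U) / (2 * U))
    - (1 / 4) * (Real.sin U ^ 2 / U)

noncomputable def E₃ (L : ℕ) (U : ℝ) : ℝ :=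
  (Real.pi * L + U) * (Real.sin (2 * U) / (2 * U))
    - (1 / 2) * (Real.sin U ^ 2 / U)

theorem secondary_exact_complete_hybrid_formula
    (L : ℕ) (hL : 1 ≤ L) (U : ℝ) (hU : 0 < U) (hU' : U < π / 4)
    (Δ₄ Δ₅ : ℝ) (hΔ₄ : 0 < Δ₄) (hΔ₅ : 0 < Δ₅) (hne : Δ₄ ≠ Δ₅)
    (a₁ a₂ a₃ : ℝ)
    (ha₁ : a₁ ∈ Set.Ioo (π * L) (π * L + U))
    (ha₂ : a₂ ∈ Set.Ioo (π * L) (π * L + U))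
    (ha₃ : a₃ ∈ Set.Ioo (π * L) (π * L + U))
    (N₁ N₂ N₃ Q₁ Q₂ Q₃ A₁ A₂ A₃ B₁ B₂ B₃ P₁4 P₂4 P₃4 P₁5 P₂5 P₃5 : ℝ)
    (hN₁ : 0 < N₁) (hN₂ : 0 < N₂) (hN₃ : 0 < N₃)
    (hQ₁ : 0 < Q₁) (hQ₂ : 0 < Q₂) (hQ₃ : 0 < Q₃)
    (hA₁ : 0 < A₁) (hA₂ : 0 < A₂) (hA₃ : 0 < A₃)
    (hB₁ : 0 < B₁) (hB₂ : 0 < B₂) (hB₃ : 0 < B₃)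
    (hP₁4 : 0 < P₁4) (hP₂4 : 0 < P₂4) (hP₃4 : 0 < P₃4)
    (hP₁5 : 0 < P₁5) (hP₂5 : 0 < P₂5) (hP₃5 : 0 < P₃5)
    (h₁ : a₁ * Real.sin a₁ ^ 2 * (N₁ / Q₁) = E₁ L U)
    (h₂ : a₂ * Real.cos a₂ ^ 2 * (N₂ / Q₂) = E₂ L U)
    (h₃ : a₃ * Real.cos (2 * a₃) * (N₃ / Q₃) = E₃ L U)
    (g₁ : (1 + Δ₄) ^ (1 / Δ₄) * A₁ * (P₁4 / Q₁) ^ (1 / Δ₄)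
        = (1 + Δ₅) ^ (1 / Δ₅) * B₁ * (P₁5 / Q₁) ^ (1 / Δ₅))
    (g₂ : (1 + Δ₄) ^ (1 / Δ₄) * A₂ * (P₂4 / Q₂) ^ (1 / Δ₄)
        = (1 + Δ₅) ^ (1 / Δ₅) * B₂ * (P₂5 / Q₂) ^ (1 / Δ₅))
    (g₃ : (1 + Δ₄) ^ (1 / Δ₄) * A₃ * (P₃4 / Q₃) ^ (1 / Δ₄)
        = (1 + Δ₅) ^ (1 / Δ₅) * B₃ * (P₃5 / Q₃) ^ (1 / Δ₅)) :
    a₂ * N₂ * P₂5 ^ (Δ₄ / (Δ₅ - Δ₄)) * P₂4 ^ (-(Δ₅ / (Δ₅ - Δ₄)))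
        * (A₂ / B₂) ^ (-(Δ₄ * Δ₅ / (Δ₅ - Δ₄))) * Real.cos a₂ ^ 2
      - a₁ * N₁ * P₁5 ^ (Δ₄ / (Δ₅ - Δ₄)) * P₁4 ^ (-(Δ₅ / (Δ₅ - Δ₄)))
        * (A₁ / B₁) ^ (-(Δ₄ * Δ₅ / (Δ₅ - Δ₄))) * Real.sin a₁ ^ 2
      = a₃ * N₃ * P₃5 ^ (Δ₄ / (Δ₅ - Δ₄)) * P₃4 ^ (-(Δ₅ / (Δ₅ - Δ₄)))
        * (A₃ / B₃) ^ (-(Δ₄ * Δ₅ / (Δ₅ - Δ₄))) * Real.cos (2 * a₃) :=  by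
  have e₁ := key_aux Δ₄ Δ₅ hΔ₄ hΔ₅ hne Q₁ A₁ B₁ P₁4 P₁5 hQ₁ hA₁ hB₁ hP₁4 hP₁5 g₁
  have e₂ := key_aux Δ₄ Δ₅ hΔ₄ hΔ₅ hne Q₂ A₂ B₂ P₂4 P₂5 hQ₂ hA₂ hB₂ hP₂4 hP₂5 g₂
  have e₃ := key_aux Δ₄ Δ₅ hΔ₄ hΔ₅ hne Q₃ A₃ B₃ P₃4 P₃5 hQ₃ hA₃ hB₃ hP₃4 hP₃5 g₃
  set C := (1 + Δ₄) ^ (Δ₅ / (Δ₅ - Δ₄)) * (1 + Δ₅) ^ (-(Δ₄ / (Δ₅ - Δ₄))) with hC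
  have hE : E₂ L U - E₁ L U = E₃ L U := by unfold E₁ E₂ E₃; ring
  linear_combination (a₂ * N₂ * Real.cos a₂ ^ 2) * e₂ - (a₁ * N₁ * Real.sin a₁ ^ 2) * e₁
    - (a₃ * N₃ * Real.cos (2 * a₃)) * e₃ + C * h₂ - C * h₁ - C * h₃ + C * hE
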